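/- For every integer w ≥ 1 and every integer x, one has Σ_{j=1}^{2^w - 1} ((2^{2τ(j)+1} + 1)/(3·2^{2w-1}))·(1 - cos(2πjx/2^w)) = g_{np,w}(x), where τ(j) is the exponent of 2 in j, g_{np,w}(x) = 2^{-τ(x)} if 2^w ∤ x and g_{np,w}(x) = 0 if 2^w ∣ x. -/

import Mathlib

open Real

/-- `gnp w x` is the `2^w`-periodic version of the nearly periodic function
`x ↦ 2^{-τ(x)}`, where `τ` is the 2-adic valuation. -/
noncomputable def gnp (w : ℕ) (x : ℤ) : ℝ :=
  if (2 : ℤ) ^ w ∣ x then 0 else (2 : ℝ) ^ (-(padicValInt 2 x : ℤ))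

open Finset in
lemma cos_sum (n : ℕ) (hn : 0 < n) (x : ℤ) :
    ∑ j ∈ Finset.range n, Real.cos (2 * π * (j : ℝ) * (x : ℝ) / n) =
      if (n : ℤ) ∣ x then (n : ℝ) else 0 := by
  have hn' : (n : ℂ) ≠ 0 := Nat.cast_ne_zero.mpr hn.ne'
  set z : ℂ := Complex.exp ((2 * π * x / n : ℝ) * Complex.I) with hz
  have hterm : ∀ j ∈ Finset.range n, Real.cos (2 * π * (j : ℝ) * (x : ℝ) / n) = (z ^ j).re := by
    intro j _
    rw [hz, ← Complex.exp_nat_mul,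
      show ((j:ℂ) * (((2 * π * x / n : ℝ) : ℂ) * Complex.I)) = ((2 * π * (j:ℝ) * (x:ℝ) / n : ℝ) : ℂ) * Complex.I by push_cast; ring,
      Complex.exp_ofReal_mul_I_re]
  rw [Finset.sum_congr rfl hterm, ← Complex.re_sum]
  by_cases hdvd : (n : ℤ) ∣ x
  · have hz1 : z = 1 := by
      obtain ⟨k, hk⟩ := hdvd
      rw [hz, show (((2 * π * x / n : ℝ)) : ℂ) * Complex.I = (k : ℤ) * (2 * π * Complex.I) by
        push_cast [hk]; field_simp, Complex.exp_int_mul_two_pi_mul_I]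
    simp [hdvd, hz1]
  · have hzn : z ^ n = 1 := by
      rw [hz, ← Complex.exp_nat_mul,
        show ((n:ℂ) * (((2 * π * x / n : ℝ)) * Complex.I)) = (x : ℤ) * (2 * π * Complex.I) by
          push_cast; field_simp, Complex.exp_int_mul_two_pi_mul_I]
    have hz1 : z ≠ 1 := by
      intro h
      rw [hz, Complex.exp_eq_one_iff] at h
      obtain ⟨m, hm⟩ := h
      apply hdvd
      have him : (2 * π * x / n : ℝ) = m * (2 * π) := by
        have := congrArg Complex.im hm
        simpa using this
      have hx : (x : ℝ) = (n : ℝ) * m := by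
        have hπ : (2 * π) ≠ 0 := by positivity
        have hnR : (n : ℝ) ≠ 0 := Nat.cast_ne_zero.mpr hn.ne'
        field_simp at him
        exact mul_left_cancel₀ hπ (by linear_combination (2 * π) * him)
      exact ⟨m, by exact_mod_cast hx⟩
    have : ∑ j ∈ Finset.range n, z ^ j = 0 := by
      rw [geom_sum_eq hz1, hzn]; simp
    simp [hdvd, this]

noncomputable def Fs (w : ℕ) (x : ℤ) : ℝ :=
  ∑ j ∈ Finset.range (2 ^ w),
    ((2 ^ (2 * padicValNat 2 j + 1) + 1 : ℝ) / (3 * 2 ^ (2 * w - 1))) *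
      (1 - Real.cos (2 * π * (j : ℝ) * (x : ℝ) / 2 ^ w))

noncomputable def Sv (w : ℕ) (x : ℤ) : ℝ := if (2:ℤ)^w ∣ x then ((2:ℝ)^w) else 0

lemma cos_sum' (w : ℕ) (x : ℤ) :
    ∑ j ∈ Finset.range (2^w), Real.cos (2 * π * (j : ℝ) * (x : ℝ) / 2^w) = Sv w x := by
  have := cos_sum (2^w) (by positivity) x
  rw [Sv]
  push_cast at this ⊢
  convert this using 2

lemma one_sub_cos_sum (w : ℕ) (x : ℤ) :
    ∑ j ∈ Finset.range (2^w), (1 - Real.cos (2 * π * (j : ℝ) * (x : ℝ) / 2^w)) = 2^w - Sv w x := by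
  rw [Finset.sum_sub_distrib, Finset.sum_const, cos_sum']
  simp

open Finset in
lemma sum_range_two_mul' (n : ℕ) (f : ℕ → ℝ) :
    ∑ j ∈ range (2 * n), f j = ∑ i ∈ range n, f (2 * i) + ∑ i ∈ range n, f (2 * i + 1) := by
  induction n with
  | zero => simp
  | succ n ih =>
    rw [Nat.mul_succ, sum_range_succ, sum_range_succ, ih]
    simp [sum_range_succ]
    ring

open Finset in
lemma Fs_step (w : ℕ) (hw : 1 ≤ w) (x : ℤ) :
    Fs (w + 1) x = Fs w x +
      ((if (2:ℤ)^w ∣ x then ((2:ℝ)^w)⁻¹ else 0) - (if (2:ℤ)^(w+1) ∣ x then ((2:ℝ)^w)⁻¹ else 0)) := by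
  obtain ⟨u, rfl⟩ : ∃ u, w = u + 1 := ⟨w - 1, by omega⟩
  have hpow : (2:ℝ) ^ (u + 1) ≠ 0 := by positivity
  have hargE : ∀ i : ℕ, 2 * π * ((2 * i : ℕ) : ℝ) * (x : ℝ) / 2 ^ (u + 1 + 1)
      = 2 * π * (i : ℝ) * (x : ℝ) / 2 ^ (u + 1) := by
    intro i
    rw [pow_succ]
    push_cast
    field_simp
  -- even terms
  have hA : ∀ i : ℕ,
      ((2 ^ (2 * padicValNat 2 (2 * i) + 1) + 1 : ℝ) / (3 * 2 ^ (2 * (u + 1 + 1) - 1))) *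
        (1 - Real.cos (2 * π * ((2 * i : ℕ) : ℝ) * (x : ℝ) / 2 ^ (u + 1 + 1)))
      = ((2 ^ (2 * padicValNat 2 i + 1) + 1 : ℝ) / (3 * 2 ^ (2 * (u + 1) - 1))) *
          (1 - Real.cos (2 * π * (i : ℝ) * (x : ℝ) / 2 ^ (u + 1)))
        - ((2:ℝ) ^ (2 * (u + 1) + 1))⁻¹ *
          (1 - Real.cos (2 * π * (i : ℝ) * (x : ℝ) / 2 ^ (u + 1))) := by
    intro i
    rw [hargE i]
    rcases Nat.eq_zero_or_pos i with rfl | hi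
    · norm_num
    · have hτ : padicValNat 2 (2 * i) = padicValNat 2 i + 1 := by
        rw [padicValNat.mul (by norm_num) hi.ne', padicValNat.self (by norm_num)]
        ring
      rw [hτ, show 2 * (u + 1 + 1) - 1 = 2 * u + 3 from by omega,
        show 2 * (u + 1) - 1 = 2 * u + 1 from by omega]
      have h1 : (2:ℝ) ^ (2 * u + 3) = 4 * 2 ^ (2 * u + 1) := by ring
      have h2 : (2:ℝ) ^ (2 * (padicValNat 2 i + 1) + 1) = 4 * 2 ^ (2 * padicValNat 2 i + 1) := by
        ring
      have h3 : (2:ℝ) ^ (2 * (u + 1) + 1) = 4 * 2 ^ (2 * u + 1) := by ring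
      rw [h1, h2, h3]
      have h4 : (2:ℝ) ^ (2 * u + 1) ≠ 0 := by positivity
      field_simp
      ring
  -- odd terms
  have hB : ∀ i : ℕ,
      ((2 ^ (2 * padicValNat 2 (2 * i + 1) + 1) + 1 : ℝ) / (3 * 2 ^ (2 * (u + 1 + 1) - 1))) *
        (1 - Real.cos (2 * π * ((2 * i + 1 : ℕ) : ℝ) * (x : ℝ) / 2 ^ (u + 1 + 1)))
      = ((2:ℝ) ^ (2 * (u + 1) + 1))⁻¹ *
          (1 - Real.cos (2 * π * ((2 * i + 1 : ℕ) : ℝ) * (x : ℝ) / 2 ^ (u + 1 + 1))) := by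
    intro i
    have hτ : padicValNat 2 (2 * i + 1) = 0 :=
      padicValNat.eq_zero_of_not_dvd (by omega)
    rw [hτ, show 2 * (u + 1 + 1) - 1 = 2 * (u + 1) + 1 from by omega]
    have h4 : (2:ℝ) ^ (2 * (u + 1) + 1) ≠ 0 := by positivity
    field_simp
    ring
  set w := u + 1 with hwdef
  -- split the sum
  have hsplit : Fs (w + 1) x =
      (∑ i ∈ range (2 ^ w),
        (((2 ^ (2 * padicValNat 2 i + 1) + 1 : ℝ) / (3 * 2 ^ (2 * w - 1))) *
          (1 - Real.cos (2 * π * (i : ℝ) * (x : ℝ) / 2 ^ w))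
        - ((2:ℝ) ^ (2 * w + 1))⁻¹ * (1 - Real.cos (2 * π * (i : ℝ) * (x : ℝ) / 2 ^ w))))
      + ∑ i ∈ range (2 ^ w),
          ((2:ℝ) ^ (2 * w + 1))⁻¹ *
            (1 - Real.cos (2 * π * ((2 * i + 1 : ℕ) : ℝ) * (x : ℝ) / 2 ^ (w + 1))) := by
    rw [Fs, show 2 ^ (w + 1) = 2 * 2 ^ w from by rw [pow_succ]; ring,
      sum_range_two_mul']
    congr 1
    · exact Finset.sum_congr rfl (fun i _ => hA i)
    · exact Finset.sum_congr rfl (fun i _ => hB i)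
  -- evaluate
  have hodd : ∑ i ∈ range (2 ^ w),
      (1 - Real.cos (2 * π * ((2 * i + 1 : ℕ) : ℝ) * (x : ℝ) / 2 ^ (w + 1)))
      = 2 ^ w - Sv (w + 1) x + Sv w x := by
    have hfull := one_sub_cos_sum (w + 1) x
    rw [show 2 ^ (w + 1) = 2 * 2 ^ w from by rw [pow_succ]; ring, sum_range_two_mul'] at hfull
    have heven : ∑ i ∈ range (2 ^ w),
        (1 - Real.cos (2 * π * ((2 * i : ℕ) : ℝ) * (x : ℝ) / 2 ^ (w + 1)))
        = 2 ^ w - Sv w x := by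
      rw [← one_sub_cos_sum w x]
      exact Finset.sum_congr rfl (fun i _ => by rw [hargE i])
    rw [heven] at hfull
    have h2w : (2:ℝ) ^ (w + 1) = 2 * 2 ^ w := by ring
    linarith [hfull]
  rw [hsplit, Finset.sum_sub_distrib, ← Fs, ← Finset.mul_sum, ← Finset.mul_sum,
    one_sub_cos_sum, hodd]
  have hS : Sv w x = if (2:ℤ)^w ∣ x then ((2:ℝ)^w) else 0 := rfl
  have hS' : Sv (w+1) x = if (2:ℤ)^(w+1) ∣ x then ((2:ℝ)^(w+1)) else 0 := rfl
  rw [hS, hS']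
  have e1 : (2:ℝ) ^ (2 * w + 1) = 2 * 2 ^ w * 2 ^ w := by ring
  have e2 : (2:ℝ) ^ (w + 1) = 2 * 2 ^ w := by ring
  have hne : (2:ℝ) ^ w ≠ 0 := by positivity
  by_cases h2 : (2:ℤ)^(w+1) ∣ x
  · have h1 : (2:ℤ)^w ∣ x := dvd_trans (pow_dvd_pow 2 (Nat.le_succ w)) h2
    simp only [h1, h2, if_true]
    rw [e1, e2]
    field_simp
    ring
  · by_cases h1 : (2:ℤ)^w ∣ x
    · simp only [h1, h2, if_true, if_false]
      rw [e1]
      field_simp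
      ring
    · simp only [h1, h2, if_false]
      rw [e1]
      field_simp
      ring

lemma padicValInt_eq_of (w : ℕ) (x : ℤ) (h1 : (2:ℤ)^w ∣ x) (h2 : ¬ (2:ℤ)^(w+1) ∣ x) :
    padicValInt 2 x = w := by
  have hx : x ≠ 0 := by rintro rfl; exact h2 (dvd_zero _)
  have hle : w ≤ padicValInt 2 x := by
    have := (padicValInt_dvd_iff (p := 2) w x).mp (by exact_mod_cast h1)
    tauto
  have hlt : ¬ (w + 1 ≤ padicValInt 2 x) := by
    intro h
    exact h2 (by exact_mod_cast (padicValInt_dvd_iff (p := 2) (w+1) x).mpr (Or.inr h))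
  omega

lemma gnp_step (w : ℕ) (x : ℤ) :
    gnp (w + 1) x = gnp w x +
      ((if (2:ℤ)^w ∣ x then ((2:ℝ)^w)⁻¹ else 0) - (if (2:ℤ)^(w+1) ∣ x then ((2:ℝ)^w)⁻¹ else 0)) := by
  by_cases h2 : (2:ℤ)^(w+1) ∣ x
  · have h1 : (2:ℤ)^w ∣ x := dvd_trans (pow_dvd_pow 2 (Nat.le_succ w)) h2
    simp [gnp, h1, h2]
  · by_cases h1 : (2:ℤ)^w ∣ x
    · have hv : padicValInt 2 x = w := padicValInt_eq_of w x h1 h2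
      simp [gnp, h1, h2, hv, zpow_neg, zpow_natCast]
    · simp [gnp, h1, h2]

lemma Fs_base (x : ℤ) : Fs 1 x = gnp 1 x := by
  have h : Fs 1 x = (1/2) * (1 - Real.cos (π * (x : ℝ))) := by
    rw [Fs]
    norm_num [Finset.sum_range_succ, padicValNat.one]
    ring_nf
  rw [h, gnp]
  by_cases hd : (2:ℤ)^1 ∣ x
  · obtain ⟨k, hk⟩ : ∃ k, x = 2 * k := by
      obtain ⟨k, hk⟩ := hd; exact ⟨k, by linarith [hk]⟩
    have : (π * (x:ℝ)) = (k : ℤ) * (2 * π) := by push_cast [hk]; ring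
    rw [this, Real.cos_int_mul_two_pi]
    have hd' : (2:ℤ) ∣ x := by simpa using hd
    simp [hd']
  · obtain ⟨k, hk⟩ : ∃ k : ℤ, x = 2 * k + 1 := by
      refine ⟨(x - 1) / 2, ?_⟩
      omega
    have : (π * (x:ℝ)) = (k : ℤ) * (2 * π) + π := by push_cast [hk]; ring
    rw [this, Real.cos_int_mul_two_pi_add_pi]
    have hval : padicValInt 2 x = 0 := padicValInt.eq_zero_of_not_dvd (by
      intro h; exact hd (by simpa using h))
    have hd' : ¬ (2:ℤ) ∣ x := by simpa using hd
    simp [hd', hval]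
    norm_num

lemma Fs_eq_gnp (w : ℕ) (hw : 1 ≤ w) (x : ℤ) : Fs w x = gnp w x := by
  induction w, hw using Nat.le_induction with
  | base => exact Fs_base x
  | succ w hw ih => rw [Fs_step w hw x, gnp_step w x, ih]

theorem stmt_9 (w : ℕ) (hw : 1 ≤ w) (x : ℤ) :
    ∑ j ∈ Finset.Icc 1 (2 ^ w - 1),
      ((2 ^ (2 * padicValNat 2 j + 1) + 1 : ℝ) / (3 * 2 ^ (2 * w - 1))) *
        (1 - Real.cos (2 * π * (j : ℝ) * (x : ℝ) / 2 ^ w))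
      = gnp w x := by
  have h1 : (1:ℕ) ≤ 2 ^ w := Nat.one_le_two_pow
  rw [← Fs_eq_gnp w hw x, Fs, Finset.range_eq_Ico, Finset.sum_eq_sum_Ico_succ_bot (by omega),
    show Finset.Icc 1 (2^w - 1) = Finset.Ico 1 (2^w) by rw [← Finset.Ico_add_one_right_eq_Icc]; congr 1; omega]
  norm_num
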